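/- For n ≥ 1, define i_max(n) := the greatest i with 1 ≤ i ≤ t(n) − 1 such that split(n,i) holds (and i_max(n) := 0 if no such i exists), and R(n) := t(n) − i_max(n) (the number of mountains in the leftmost range of the MMB structure on n leaves). Then for every natural number s ≥ 0: (a) if 4·2^s ≤ n+1 < 5·2^s then R(n) ≥ 2, and Σ_{n = 4·2^s − 1}^{5·2^s − 2} R(n) = 4·2^s − 2; (b) if 5·2^s ≤ n+1 < 6·2^s then R(n) = 2; (c) if 6·2^s ≤ n+1 < 7·2^s then R(n) = 1; and (d) if 7·2^s ≤ n+1 < 8·2^s then R(n) ≥ 2, and Σ_{n = 7·2^s − 1}^{8·2^s − 2} R(n) = 3·2^s − 1. -/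

import Mathlib

/-- The `i`-th binary digit of `m`. -/
def bit (i m : ℕ) : ℕ := m / 2 ^ i % 2

/-- `Split n i` holds iff there is a range split between the mountains at positions `i`
and `i−1` of the MMB structure on `n` leaves. -/
def Split (n i : ℕ) : Prop :=
  bit i (n + 1) = 1 ∧ (bit (i + 1) (n + 1) = 0 ∨ bit (i - 1) (n + 1) = 0)

/-- The greatest `i` with `1 ≤ i ≤ t(n) − 1` such that `Split n i` holds, and `0` if no
such `i` exists, where `t(n) = ⌊log₂ (n+1)⌋`. -/
noncomputable def imax (n : ℕ) : ℕ :=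
  sSup {i : ℕ | 1 ≤ i ∧ i ≤ Nat.log 2 (n + 1) - 1 ∧ Split n i}

/-- The number of mountains in the leftmost range of the MMB structure on `n` leaves. -/
noncomputable def R (n : ℕ) : ℕ := Nat.log 2 (n + 1) - imax n

lemma bit_zero (m : ℕ) : bit 0 m = m % 2 := by simp [bit]

lemma bit_succ (i m : ℕ) : bit (i+1) m = bit i (m / 2) := by
  simp [bit, Nat.div_div_eq_div_mul, pow_succ, mul_comm]

lemma bit_lo {i B : ℕ} (A r : ℕ) (h : i < B) : bit i (A * 2^B + r) = bit i r := by
  induction i generalizing B r with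
  | zero =>
    have hp : 2^B = 2 * 2^(B-1) := by
      conv_lhs => rw [show B = (B-1)+1 by omega, pow_succ]
      ring
    have he : A * 2^B = 2 * (A * 2^(B-1)) := by rw [hp]; ring
    rw [bit_zero, bit_zero]; omega
  | succ i ih =>
    have hp : 2^B = 2 * 2^(B-1) := by
      conv_lhs => rw [show B = (B-1)+1 by omega, pow_succ]
      ring
    have he : A * 2^B = 2 * (A * 2^(B-1)) := by rw [hp]; ring
    rw [bit_succ, bit_succ, show (A * 2^B + r)/2 = A * 2^(B-1) + r/2 by omega]
    exact ih _ (by omega)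

lemma bit_hi {B : ℕ} (A : ℕ) {r : ℕ} (j : ℕ) (h : r < 2^B) : bit (B+j) (A * 2^B + r) = bit j A := by
  induction B generalizing r with
  | zero => simp at h; simp [h]
  | succ B ih =>
    have he : A * 2^(B+1) = 2 * (A * 2^B) := by ring
    rw [show B+1+j = (B+j)+1 by omega, bit_succ,
      show (A * 2^(B+1) + r)/2 = A * 2^B + r/2 by omega]
    exact ih (by omega)

lemma bit_compl {B c i : ℕ} (hc : c < 2^B) (hi : i < B) :
    bit i (2^B - 1 - c) = 1 - bit i c := by
  induction i generalizing B c with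
  | zero =>
    have he : 2^B = 2 * 2^(B-1) := by
      conv_lhs => rw [show B = (B-1)+1 by omega, pow_succ]
      ring
    rw [bit_zero, bit_zero]; omega
  | succ i ih =>
    have he : 2^B = 2 * 2^(B-1) := by
      conv_lhs => rw [show B = (B-1)+1 by omega, pow_succ]
      ring
    rw [bit_succ, bit_succ, show (2^B - 1 - c)/2 = 2^(B-1) - 1 - c/2 by omega]
    exact ih (by omega) (by omega)

lemma bit_small {i r : ℕ} (h : r < 2^i) : bit i r = 0 := by
  simp [bit, Nat.div_eq_of_lt h]

lemma bit_window {i r : ℕ} (h1 : 2^i ≤ r) (h2 : r < 2^(i+1)) : bit i r = 1 := by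
  have : r / 2^i = 1 := by
    apply Nat.div_eq_of_lt_le <;> [simpa using h1; simpa [pow_succ, mul_comm] using h2]
  simp [bit, this]

lemma imax_eq {n a : ℕ}
    (h : IsGreatest {i : ℕ | 1 ≤ i ∧ i ≤ Nat.log 2 (n + 1) - 1 ∧ Split n i} a) :
    imax n = a := h.csSup_eq

lemma imax_zero {n : ℕ} (h : ∀ i, 1 ≤ i → i ≤ Nat.log 2 (n + 1) - 1 → ¬ Split n i) :
    imax n = 0 := by
  have he : {i : ℕ | 1 ≤ i ∧ i ≤ Nat.log 2 (n + 1) - 1 ∧ Split n i} = ∅ := by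
    ext i
    simp only [Set.mem_setOf_eq, Set.mem_empty_iff_false, iff_false, not_and]
    intro h1 h2 h3
    exact h i h1 h2 h3
  rw [imax, he, csSup_empty]
  rfl

lemma log_window {s m : ℕ} (h1 : 2^(s+2) ≤ m) (h2 : m < 2^(s+3)) : Nat.log 2 m = s + 2 :=
  Nat.log_eq_of_pow_le_of_lt_pow h1 h2

lemma Rc {s n : ℕ} (h1 : 6*2^s ≤ n+1) (h2 : n+1 < 7*2^s) : R n = 1 := by
  have e4 : (2:ℕ)^(s+2) = 4*2^s := by ring
  have e8 : (2:ℕ)^(s+3) = 8*2^s := by ring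
  have hlog : Nat.log 2 (n+1) = s + 2 := log_window (by omega) (by omega)
  have hm : n + 1 = 6 * 2^s + (n + 1 - 6*2^s) := by omega
  set r := n + 1 - 6*2^s with hr
  have hrs : r < 2^s := by omega
  have hb1 : bit (s+1) (n+1) = 1 := by
    rw [hm]; rw [bit_hi 6 1 hrs]; rfl
  have hb0 : bit s (n+1) = 0 := by
    rw [hm]
    have := bit_hi 6 0 hrs
    simpa using this.trans (show bit 0 6 = 0 by rfl)
  have himax : imax n = s + 1 := by
    apply imax_eq
    constructor
    · refine ⟨by omega, by rw [hlog]; omega, ?_, Or.inr ?_⟩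
      · exact hb1
      · simpa using hb0
    · rintro i ⟨hi1, hi2, hi3⟩
      rw [hlog] at hi2; omega
  rw [R, hlog, himax]; omega

lemma Rb {s n : ℕ} (h1 : 5*2^s ≤ n+1) (h2 : n+1 < 6*2^s) : R n = 2 := by
  have e4 : (2:ℕ)^(s+2) = 4*2^s := by ring
  have e8 : (2:ℕ)^(s+3) = 8*2^s := by ring
  have hlog : Nat.log 2 (n+1) = s + 2 := log_window (by omega) (by omega)
  have hm : n + 1 = 5 * 2^s + (n + 1 - 5*2^s) := by omega
  set r := n + 1 - 5*2^s with hrdef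
  have hrs : r < 2^s := by omega
  have hb0 : bit (s+1) (n+1) = 0 := by
    rw [hm, bit_hi 5 1 hrs]; rfl
  rcases Nat.eq_zero_or_pos s with hs | hs
  · subst hs
    have himax : imax n = 0 := by
      apply imax_zero
      intro i hi1 hi2 hspl
      rw [hlog] at hi2
      have : i = 1 := by omega
      subst this
      exact absurd hspl.1 (by rw [hb0]; omega)
    rw [R, hlog, himax]
  · have hb1 : bit s (n+1) = 1 := by
      rw [hm]
      have := bit_hi 5 0 hrs
      simpa using this.trans (show bit 0 5 = 1 by rfl)
    have himax : imax n = s := by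
      apply imax_eq
      constructor
      · exact ⟨by omega, by rw [hlog]; omega, hb1, Or.inl hb0⟩
      · rintro i ⟨hi1, hi2, hi3, _⟩
        rw [hlog] at hi2
        by_contra hgt
        have : i = s + 1 := by omega
        subst this
        rw [hb0] at hi3; omega
    rw [R, hlog, himax]; omega

lemma Ra {s r : ℕ} (hr : r < 2^s) : R (4*2^s + r - 1) = s + 2 - Nat.log 2 r := by
  have e4 : (2:ℕ)^(s+2) = 4*2^s := by ring
  have e8 : (2:ℕ)^(s+3) = 8*2^s := by ring
  have h1 : (1:ℕ) ≤ 2^s := Nat.one_le_two_pow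
  have hm : 4*2^s + r - 1 + 1 = 1 * 2^(s+2) + r := by omega
  have hlog : Nat.log 2 (4*2^s + r - 1 + 1) = s + 2 := log_window (by omega) (by omega)
  have hbits : ∀ i, i < s + 2 → bit i (4*2^s + r - 1 + 1) = bit i r := by
    intro i hi
    rw [hm, bit_lo _ _ hi]
  rcases Nat.lt_or_ge r 2 with hr2 | hr2
  · have hlogr : Nat.log 2 r = 0 := by
      interval_cases r <;> simp
    have himax : imax (4*2^s + r - 1) = 0 := by
      apply imax_zero
      intro i hi1 hi2 hspl
      rw [hlog] at hi2
      have : bit i r = 0 := bit_small (lt_of_lt_of_le hr2 (by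
        calc (2:ℕ) ≤ 2^1 := by norm_num
        _ ≤ 2^i := Nat.pow_le_pow_right (by norm_num) hi1))
      obtain ⟨ha, -⟩ := hspl
      rw [hbits i (by omega), this] at ha
      omega
    rw [R, hlog, himax, hlogr]
  · set j := Nat.log 2 r with hjdef
    have hj1 : 2^j ≤ r := Nat.pow_log_le_self 2 (by omega)
    have hj2 : r < 2^(j+1) := Nat.lt_pow_succ_log_self (by norm_num) r
    have hjge : 1 ≤ j := by
      by_contra h
      have : j = 0 := by omega
      rw [this] at hj2; norm_num at hj2; omega
    have hjlt : j < s := by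
      have := lt_of_le_of_lt hj1 hr
      exact (Nat.pow_lt_pow_iff_right (by norm_num : 1 < 2)).mp this
    have himax : imax (4*2^s + r - 1) = j := by
      apply imax_eq
      constructor
      · refine ⟨hjge, by rw [hlog]; omega, ?_, Or.inl ?_⟩
        · rw [hbits j (by omega)]; exact bit_window hj1 hj2
        · rw [hbits (j+1) (by omega)]; exact bit_small hj2
      · rintro i ⟨hi1, hi2, hi3, _⟩
        rw [hlog] at hi2
        by_contra hgt
        push_neg at hgt
        have : bit i r = 0 := bit_small (lt_of_lt_of_le hj2 (Nat.pow_le_pow_right (by norm_num) (by omega)))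
        rw [hbits i (by omega), this] at hi3
        omega
    rw [R, hlog, himax]

lemma Rd {s r : ℕ} (hr : r < 2^s) :
    R (7*2^s + r - 1) = s + 2 - (if 2^s - 1 - r = 0 then 0 else Nat.log 2 (2^s - 1 - r) + 1) := by
  have e4 : (2:ℕ)^(s+2) = 4*2^s := by ring
  have e8 : (2:ℕ)^(s+3) = 8*2^s := by ring
  have h1 : (1:ℕ) ≤ 2^s := Nat.one_le_two_pow
  set c := 2^s - 1 - r with hcdef
  have hcs : c < 2^s := by omega
  have hm : 7*2^s + r - 1 + 1 = 2^(s+3) - 1 - c := by omega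
  have hlog : Nat.log 2 (7*2^s + r - 1 + 1) = s + 2 := log_window (by omega) (by omega)
  have hbits : ∀ i, i < s + 3 → bit i (7*2^s + r - 1 + 1) = 1 - bit i c := by
    intro i hi
    rw [hm, bit_compl (by omega) hi]
  rcases Nat.eq_zero_or_pos c with hc0 | hc0
  · have himax : imax (7*2^s + r - 1) = 0 := by
      apply imax_zero
      intro i hi1 hi2 hspl
      rw [hlog] at hi2
      have z : ∀ k, k < s + 3 → bit k (7*2^s + r - 1 + 1) = 1 := by
        intro k hk
        rw [hbits k hk, hc0, bit_small (Nat.pow_pos (n := k) (by norm_num) : 0 < 2^k)]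
      rcases hspl.2 with h | h
      · rw [z (i+1) (by omega)] at h; omega
      · rw [z (i-1) (by omega)] at h; omega
    rw [R, hlog, himax, if_pos hc0]
  · set j := Nat.log 2 c with hjdef
    have hj1 : 2^j ≤ c := Nat.pow_log_le_self 2 (by omega)
    have hj2 : c < 2^(j+1) := Nat.lt_pow_succ_log_self (by norm_num) c
    have hjlt : j < s := by
      have := lt_of_le_of_lt hj1 hcs
      exact (Nat.pow_lt_pow_iff_right (by norm_num : 1 < 2)).mp this
    have himax : imax (7*2^s + r - 1) = j + 1 := by
      apply imax_eq
      constructor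
      · refine ⟨by omega, by rw [hlog]; omega, ?_, Or.inr ?_⟩
        · rw [hbits (j+1) (by omega), bit_small hj2]
        · have : (j + 1) - 1 = j := by omega
          rw [this, hbits j (by omega), bit_window hj1 hj2]
      · rintro i ⟨hi1, hi2, hi3, hi4⟩
        rw [hlog] at hi2
        by_contra hgt
        push_neg at hgt
        have hz : ∀ k, j + 1 ≤ k → k < s + 3 → bit k (7*2^s + r - 1 + 1) = 1 := by
          intro k hk1 hk2
          rw [hbits k hk2, bit_small (lt_of_lt_of_le hj2 (Nat.pow_le_pow_right (by norm_num) hk1))]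
        rcases hi4 with h | h
        · rw [hz (i+1) (by omega) (by omega)] at h; omega
        · rw [hz (i-1) (by omega) (by omega)] at h; omega
    rw [R, hlog, himax, if_neg (by omega)]

lemma sum_log (s : ℕ) : ∑ r ∈ Finset.range (2^s), (Nat.log 2 r + 2) = s * 2^s + 2 := by
  induction s with
  | zero => simp
  | succ s ih =>
    have hle : (2:ℕ)^s ≤ 2^(s+1) := Nat.pow_le_pow_right (by norm_num) (by omega)
    rw [Finset.range_eq_Ico, ← Finset.sum_Ico_consecutive _ (Nat.zero_le _) hle,
      ← Finset.range_eq_Ico, ih]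
    have hconst : ∑ r ∈ Finset.Ico (2^s) (2^(s+1)), (Nat.log 2 r + 2) =
        ∑ _r ∈ Finset.Ico (2^s) (2^(s+1)), (s + 2) := by
      apply Finset.sum_congr rfl
      intro r hrm
      rw [Finset.mem_Ico] at hrm
      rw [Nat.log_eq_of_pow_le_of_lt_pow hrm.1 hrm.2]
    rw [hconst, Finset.sum_const, Nat.card_Ico, smul_eq_mul]
    have h2 : (2:ℕ)^(s+1) - 2^s = 2^s := by
      have : (2:ℕ)^(s+1) = 2 * 2^s := by ring
      omega
    rw [h2]
    ring

lemma sum_size (s : ℕ) :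
    ∑ c ∈ Finset.range (2^s), ((if c = 0 then 0 else Nat.log 2 c + 1) + 1) = s * 2^s + 1 := by
  induction s with
  | zero => simp
  | succ s ih =>
    have hle : (2:ℕ)^s ≤ 2^(s+1) := Nat.pow_le_pow_right (by norm_num) (by omega)
    rw [Finset.range_eq_Ico, ← Finset.sum_Ico_consecutive _ (Nat.zero_le _) hle,
      ← Finset.range_eq_Ico, ih]
    have hconst : ∑ c ∈ Finset.Ico (2^s) (2^(s+1)), ((if c = 0 then 0 else Nat.log 2 c + 1) + 1) =
        ∑ _c ∈ Finset.Ico (2^s) (2^(s+1)), (s + 2) := by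
      apply Finset.sum_congr rfl
      intro c hcm
      rw [Finset.mem_Ico] at hcm
      have hc0 : c ≠ 0 := by
        have : (1:ℕ) ≤ 2^s := Nat.one_le_two_pow
        omega
      rw [if_neg hc0, Nat.log_eq_of_pow_le_of_lt_pow hcm.1 hcm.2]
    rw [hconst, Finset.sum_const, Nat.card_Ico, smul_eq_mul]
    have h2 : (2:ℕ)^(s+1) - 2^s = 2^s := by
      have : (2:ℕ)^(s+1) = 2 * 2^s := by ring
      omega
    rw [h2]
    ring


/-- The number of mountains in the leftmost range of the MMB structure, in the four
sub-intervals `4·2^s ≤ n+1 < 8·2^s`. -/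
theorem mmb_leftmost_range (s : ℕ) :
    ((∀ n : ℕ, 4 * 2 ^ s ≤ n + 1 → n + 1 < 5 * 2 ^ s → 2 ≤ R n) ∧
      ∑ n ∈ Finset.Icc (4 * 2 ^ s - 1) (5 * 2 ^ s - 2), R n = 4 * 2 ^ s - 2) ∧
    (∀ n : ℕ, 5 * 2 ^ s ≤ n + 1 → n + 1 < 6 * 2 ^ s → R n = 2) ∧
    (∀ n : ℕ, 6 * 2 ^ s ≤ n + 1 → n + 1 < 7 * 2 ^ s → R n = 1) ∧
    ((∀ n : ℕ, 7 * 2 ^ s ≤ n + 1 → n + 1 < 8 * 2 ^ s → 2 ≤ R n) ∧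
      ∑ n ∈ Finset.Icc (7 * 2 ^ s - 1) (8 * 2 ^ s - 2), R n = 3 * 2 ^ s - 1) := by
  have hE : (1:ℕ) ≤ 2^s := Nat.one_le_two_pow
  have logle : ∀ r : ℕ, r < 2^s → Nat.log 2 r ≤ s := by
    intro r hr
    calc Nat.log 2 r ≤ Nat.log 2 (2^s) := Nat.log_mono_right (by omega)
      _ = s := Nat.log_pow (by norm_num) s
  refine ⟨⟨?_, ?_⟩, ?_, ?_, ?_, ?_⟩
  · -- (a) inequality
    intro n h1 h2
    have hr : n + 1 - 4*2^s < 2^s := by omega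
    have hn : n = 4*2^s + (n + 1 - 4*2^s) - 1 := by omega
    rw [hn, Ra hr]
    have := logle _ hr
    omega
  · -- (a) sum
    rw [show Finset.Icc (4 * 2^s - 1) (5 * 2^s - 2) =
        Finset.Ico (4 * 2^s - 1) (5 * 2^s - 2 + 1) by rw [Finset.Ico_add_one_right_eq_Icc],
      Finset.sum_Ico_eq_sum_range,
      show 5 * 2^s - 2 + 1 - (4 * 2^s - 1) = 2^s by omega]
    have hcg : ∑ i ∈ Finset.range (2^s), R (4 * 2^s - 1 + i) =
        ∑ i ∈ Finset.range (2^s), (s + 2 - Nat.log 2 i) := by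
      apply Finset.sum_congr rfl
      intro i hi
      rw [Finset.mem_range] at hi
      rw [show 4 * 2^s - 1 + i = 4 * 2^s + i - 1 by omega, Ra hi]
    rw [hcg]
    have hkey : ∑ i ∈ Finset.range (2^s), (s + 2 - Nat.log 2 i) +
        ∑ i ∈ Finset.range (2^s), (Nat.log 2 i + 2) = (s + 4) * 2^s := by
      rw [← Finset.sum_add_distrib]
      have : ∀ i ∈ Finset.range (2^s), (s + 2 - Nat.log 2 i) + (Nat.log 2 i + 2) = s + 4 := by
        intro i hi
        rw [Finset.mem_range] at hi
        have := logle i hi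
        omega
      rw [Finset.sum_congr rfl this, Finset.sum_const, Finset.card_range, smul_eq_mul, Nat.mul_comm]
    rw [sum_log] at hkey
    have he : (s + 4) * 2^s = s * 2^s + 4 * 2^s := by ring
    rw [he] at hkey
    set X := s * 2^s
    set Y := ∑ i ∈ Finset.range (2^s), (s + 2 - Nat.log 2 i)
    omega
  · -- (b)
    intro n h1 h2
    exact Rb h1 h2
  · -- (c)
    intro n h1 h2
    exact Rc h1 h2
  · -- (d) inequality
    intro n h1 h2
    have hr : n + 1 - 7*2^s < 2^s := by omega
    have hn : n = 7*2^s + (n + 1 - 7*2^s) - 1 := by omega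
    rw [hn, Rd hr]
    set c := 2^s - 1 - (n + 1 - 7*2^s) with hc
    have hcs : c < 2^s := by omega
    rcases Nat.eq_zero_or_pos c with h0 | h0
    · rw [if_pos h0]; omega
    · rw [if_neg (by omega)]
      have : Nat.log 2 c < s := (Nat.log_lt_iff_lt_pow (by norm_num) (by omega)).mpr hcs
      omega
  · -- (d) sum
    rw [show Finset.Icc (7 * 2^s - 1) (8 * 2^s - 2) =
        Finset.Ico (7 * 2^s - 1) (8 * 2^s - 2 + 1) by rw [Finset.Ico_add_one_right_eq_Icc],
      Finset.sum_Ico_eq_sum_range,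
      show 8 * 2^s - 2 + 1 - (7 * 2^s - 1) = 2^s by omega]
    have hcg : ∑ i ∈ Finset.range (2^s), R (7 * 2^s - 1 + i) =
        ∑ i ∈ Finset.range (2^s),
          (s + 2 - (if 2^s - 1 - i = 0 then 0 else Nat.log 2 (2^s - 1 - i) + 1)) := by
      apply Finset.sum_congr rfl
      intro i hi
      rw [Finset.mem_range] at hi
      rw [show 7 * 2^s - 1 + i = 7 * 2^s + i - 1 by omega, Rd hi]
    rw [hcg]
    rw [Finset.sum_range_reflect
      (fun c => s + 2 - (if c = 0 then 0 else Nat.log 2 c + 1)) (2^s)]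
    have hkey : ∑ c ∈ Finset.range (2^s), (s + 2 - (if c = 0 then 0 else Nat.log 2 c + 1)) +
        ∑ c ∈ Finset.range (2^s), ((if c = 0 then 0 else Nat.log 2 c + 1) + 1) =
        (s + 3) * 2^s := by
      rw [← Finset.sum_add_distrib]
      have : ∀ c ∈ Finset.range (2^s),
          (s + 2 - (if c = 0 then 0 else Nat.log 2 c + 1)) +
            ((if c = 0 then 0 else Nat.log 2 c + 1) + 1) = s + 3 := by
        intro c hc
        rw [Finset.mem_range] at hc
        have := logle c hc
        split <;> omega
      rw [Finset.sum_congr rfl this, Finset.sum_const, Finset.card_range, smul_eq_mul, Nat.mul_comm]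
    rw [sum_size] at hkey
    have he : (s + 3) * 2^s = s * 2^s + 3 * 2^s := by ring
    rw [he] at hkey
    set X := s * 2^s
    set Y := ∑ c ∈ Finset.range (2^s), (s + 2 - (if c = 0 then 0 else Nat.log 2 c + 1))
    omega
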